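/- Every free group is subgroup separable. -/

import Mathlib

/-- A group is subgroup separable (LERF) if every finitely generated subgroup
can be separated from any element outside it in a finite quotient. -/
def SubgroupSeparable (G : Type) [Group G] : Prop :=
  ∀ K : Subgroup G, K.FG → ∀ g : G, g ∉ K →
    ∃ (Q : Type) (_ : Group Q) (_ : Finite Q) (φ : G →* Q),
      Function.Surjective φ ∧ φ g ∉ K.map φ

/-- Any injective partial function on a finite type extends to a permutation. -/
lemma exists_perm_extend {V : Type} [Fintype V] (p : V → Prop)
    (f : ∀ x, p x → V) (hinj : ∀ x hx y hy, f x hx = f y hy → x = y) :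
    ∃ e : Equiv.Perm V, ∀ x hx, e x = f x hx := by
  classical
  set A : Set V := {x | p x} with hA
  set B : Set V := {y | ∃ x hx, f x hx = y} with hB
  have hcard : Fintype.card (↥Aᶜ) = Fintype.card (↥Bᶜ) := by
    have h1 : Fintype.card A = Fintype.card B := by
      apply Fintype.card_congr
      refine Equiv.ofBijective (fun x => ⟨f x x.2, x, x.2, rfl⟩) ⟨?_, ?_⟩
      · rintro ⟨x, hx⟩ ⟨y, hy⟩ h
        simpa using hinj x hx y hy (by simpa using h)
      · rintro ⟨y, x, hx, rfl⟩; exact ⟨⟨x, hx⟩, rfl⟩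
    rw [Fintype.card_compl_set, Fintype.card_compl_set, h1]
  obtain ⟨e2⟩ := Fintype.card_eq.mp hcard
  set F : V → V := fun x => if hx : p x then f x hx else (e2 ⟨x, hx⟩ : V) with hF
  have hFinj : Function.Injective F := by
    intro x y h
    simp only [hF] at h
    by_cases hx : p x <;> by_cases hy : p y <;> simp [hx, hy] at h
    · exact hinj x hx y hy h
    · exact absurd (show ((e2 ⟨y, hy⟩ : ↥Bᶜ) : V) ∈ B from ⟨x, hx, h⟩) (e2 ⟨y, hy⟩).2
    · exact absurd (show ((e2 ⟨x, hx⟩ : ↥Bᶜ) : V) ∈ B from ⟨y, hy, h.symm⟩) (e2 ⟨x, hx⟩).2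
    · exact congrArg Subtype.val (e2.injective (Subtype.ext h))
  refine ⟨Equiv.ofBijective F ((Finite.injective_iff_bijective).mp hFinj), fun x hx => ?_⟩
  simp [Equiv.ofBijective, hF, hx]

theorem stmt5 (α : Type) : SubgroupSeparable (FreeGroup α) := by
  classical
  intro K hK g hg
  obtain ⟨T, hT⟩ := hK
  set X := FreeGroup α ⧸ K with hX
  set pt : X := ((1 : FreeGroup α) : X) with hpt0
  set L : Finset (FreeGroup α) := insert g T with hL
  set Sfin : Finset X :=
    L.biUnion (fun w => (w.toWord.tails.map
      (fun l => (FreeGroup.mk l : FreeGroup α) • pt)).toFinset) with hSfin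
  have hmemS : ∀ w ∈ L, ∀ l : List (α × Bool), l <:+ w.toWord →
      ((FreeGroup.mk l : FreeGroup α) • pt) ∈ Sfin := by
    intro w hw l hl
    rw [hSfin, Finset.mem_biUnion]
    exact ⟨w, hw, by simp [List.mem_tails]; exact ⟨l, hl, rfl⟩⟩
  have hgL : g ∈ L := Finset.mem_insert_self _ _
  have hptS : pt ∈ Sfin := by
    have := hmemS g hgL [] List.nil_suffix
    simpa [← FreeGroup.one_eq_mk] using this
  set V := {x : X // x ∈ Sfin} with hV
  -- partial permutations for each letter, extended to full permutations
  have hπ : ∀ a : α, ∃ e : Equiv.Perm V,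
      ∀ (x : V) (hx : (FreeGroup.of a) • (x : X) ∈ Sfin), e x = ⟨FreeGroup.of a • (x : X), hx⟩ := by
    intro a
    apply exists_perm_extend (p := fun x : V => (FreeGroup.of a) • (x : X) ∈ Sfin)
      (f := fun x hx => ⟨FreeGroup.of a • (x : X), hx⟩)
    intro x hx y hy h
    exact Subtype.ext (MulAction.injective (FreeGroup.of a) (by simpa using congrArg Subtype.val h))
  choose π hπspec using hπ
  set φ : FreeGroup α →* Equiv.Perm V := FreeGroup.lift π with hφ
  set pt0 : V := ⟨pt, hptS⟩ with hpt0'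
  -- key claim
  have claim : ∀ l : List (α × Bool),
      (∀ l', l' <:+ l → ((FreeGroup.mk l' : FreeGroup α) • pt) ∈ Sfin) →
      (φ (FreeGroup.mk l) pt0 : X) = (FreeGroup.mk l : FreeGroup α) • pt := by
    intro l
    induction l with
    | nil => intro _; simp [← FreeGroup.one_eq_mk, hpt0']
    | cons hd tl ih =>
      intro hsuf
      obtain ⟨a, b⟩ := hd
      have htl : ∀ l', l' <:+ tl → ((FreeGroup.mk l' : FreeGroup α) • pt) ∈ Sfin :=
        fun l' h => hsuf l' (h.trans (List.suffix_cons _ _))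
      have hx : (φ (FreeGroup.mk tl) pt0 : X) = (FreeGroup.mk tl : FreeGroup α) • pt := ih htl
      set x : V := φ (FreeGroup.mk tl) pt0 with hxdef
      have hsplit : (FreeGroup.mk ((a, b) :: tl) : FreeGroup α)
          = FreeGroup.mk [(a, b)] * FreeGroup.mk tl := by
        rw [FreeGroup.mul_mk]; rfl
      have hfull : ((FreeGroup.mk ((a, b) :: tl) : FreeGroup α) • pt) ∈ Sfin :=
        hsuf _ (List.suffix_refl _)
      rw [hsplit, map_mul]
      cases b with
      | true =>
        have h1 : (FreeGroup.mk [(a, true)] : FreeGroup α) = FreeGroup.of a := rfl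
        have h2 : FreeGroup.of a • ((x : X)) ∈ Sfin := by
          rw [hx, ← mul_smul, ← h1, ← hsplit]
          exact hfull
        have h3 := hπspec a x h2
        show ((φ (FreeGroup.mk [(a, true)]) * φ (FreeGroup.mk tl)) pt0 : X) = _
        rw [Equiv.Perm.mul_apply, ← hxdef, h1, hφ, FreeGroup.lift_apply_of, h3]
        show FreeGroup.of a • (x : X) = _
        rw [hx, ← mul_smul]
      | false =>
        have h1 : (FreeGroup.mk [(a, false)] : FreeGroup α) = (FreeGroup.of a)⁻¹ := by
          rw [show (FreeGroup.of a : FreeGroup α) = FreeGroup.mk [(a, true)] from rfl]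
          rw [eq_inv_iff_mul_eq_one, FreeGroup.mul_mk]
          apply Quot.sound
          exact @FreeGroup.Red.Step.not α [] [] a false
        set y : X := (FreeGroup.mk ((a, false) :: tl) : FreeGroup α) • pt with hy
        have hyS : y ∈ Sfin := hfull
        set yv : V := ⟨y, hyS⟩ with hyv
        have hay : FreeGroup.of a • y = (x : X) := by
          rw [hy, hx, hsplit, h1, mul_smul, ← mul_smul, mul_inv_cancel, one_smul]
        have h2 : FreeGroup.of a • ((yv : V) : X) ∈ Sfin := by rw [hay]; exact x.2
        have h3 : π a yv = x := by
          rw [hπspec a yv h2]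
          exact Subtype.ext hay
        have h4 : (π a)⁻¹ x = yv := by
          rw [← h3]; simp
        show ((φ (FreeGroup.mk [(a, false)]) * φ (FreeGroup.mk tl)) pt0 : X) = _
        rw [Equiv.Perm.mul_apply, ← hxdef, h1, map_inv, hφ, FreeGroup.lift_apply_of, h4]
        show y = _
        rw [hy, hsplit, h1]
  -- elements of K fix the base point
  have hstabT : ∀ t ∈ T, φ t pt0 = pt0 := by
    intro t ht
    have h1 : ∀ l', l' <:+ (t : FreeGroup α).toWord →
        ((FreeGroup.mk l' : FreeGroup α) • pt) ∈ Sfin :=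
      fun l' h => hmemS t (Finset.mem_insert_of_mem ht) l' h
    have h2 := claim _ h1
    rw [FreeGroup.mk_toWord] at h2
    have htK : (t : FreeGroup α) ∈ K := hT ▸ Subgroup.subset_closure ht
    have h3 : (t : FreeGroup α) • pt = pt := by
      rw [hpt0]
      show ((t * 1 : FreeGroup α) : X) = ((1 : FreeGroup α) : X)
      rw [QuotientGroup.eq]
      simpa using htK
    exact Subtype.ext (h2.trans h3)
  have hstabK : ∀ k ∈ K, φ k pt0 = pt0 := by
    intro k hk
    rw [← hT] at hk
    refine Subgroup.closure_induction ?_ ?_ ?_ ?_ hk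
    · intro t ht; exact hstabT t ht
    · simp
    · intro a b _ _ ha hb
      rw [map_mul, Equiv.Perm.mul_apply, hb, ha]
    · intro a _ ha
      rw [map_inv]
      exact Equiv.Perm.inv_eq_iff_eq.mpr ha.symm
  -- g moves the base point
  have hgmove : φ g pt0 ≠ pt0 := by
    have h1 := claim g.toWord (fun l' h => hmemS g hgL l' h)
    rw [FreeGroup.mk_toWord] at h1
    intro hcon
    rw [hcon] at h1
    apply hg
    have : pt = (g : FreeGroup α) • pt := h1.symm ▸ rfl
    rw [hpt0] at this
    have h2 : ((1 : FreeGroup α) : X) = ((g * 1 : FreeGroup α) : X) := this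
    rw [QuotientGroup.eq] at h2
    simpa using h2
  -- assemble the finite quotient
  refine ⟨φ.range, inferInstance, ?_, φ.rangeRestrict, φ.rangeRestrict_surjective, ?_⟩
  · have : Finite V := inferInstance
    have : Finite (Equiv.Perm V) := inferInstance
    exact Subtype.finite
  · rintro ⟨k, hk, hkg⟩
    apply hgmove
    have : φ k = φ g := congrArg Subtype.val hkg
    rw [← this]
    exact hstabK k hk
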